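/- Misspecification in the high-reward region caps attainable performance: for 0 < c < 1, the 'top c% wrong' win rate W_top(β) = (∫₀^{1−c} u·e^{u/β} du + ∫_{1−c}^{1} (2 − c − u)·e^{u/β} du) / (β·(e^{1/β} − 1)) tends to 1 − c as β → 0⁺; in particular it stays bounded away from the optimal value 1. -/

import Mathlib

open MeasureTheory Real Filter

/-- Win rate under the 'top c% wrong' proxy reward. -/
noncomputable def Wtop (c β : ℝ) : ℝ :=
  ((∫ u in (0:ℝ)..(1 - c), u * Real.exp (u / β))
      + ∫ u in (1 - c)..(1:ℝ), (2 - c - u) * Real.exp (u / β))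
    / (β * (Real.exp (1 / β) - 1))

lemma integral_mul_exp (β a b : ℝ) (hβ : β ≠ 0) :
    ∫ u in a..b, u * Real.exp (u / β)
      = (β * b * Real.exp (b / β) - β^2 * Real.exp (b / β))
        - (β * a * Real.exp (a / β) - β^2 * Real.exp (a / β)) := by
  have key : ∀ u : ℝ, HasDerivAt (fun u => β * u * Real.exp (u / β) - β^2 * Real.exp (u / β))
      (u * Real.exp (u / β)) u := by
    intro u
    have h1 : HasDerivAt (fun u : ℝ => u / β) (1 / β) u := (hasDerivAt_id u).div_const β
    have hexp : HasDerivAt (fun u : ℝ => Real.exp (u / β)) (Real.exp (u / β) * (1 / β)) u :=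
      h1.exp
    have hA : HasDerivAt (fun u : ℝ => β * u) β u := by
      simpa using (hasDerivAt_id u).const_mul β
    have := (hA.mul hexp).sub (hexp.const_mul (β^2))
    refine this.congr_deriv ?_
    field_simp
    ring
  rw [intervalIntegral.integral_eq_sub_of_hasDerivAt (fun u _ => key u)]
  exact (Continuous.mul continuous_id (by continuity)).intervalIntegrable a b

lemma integral_sub_mul_exp (β K a b : ℝ) (hβ : β ≠ 0) :
    ∫ u in a..b, (K - u) * Real.exp (u / β)
      = (β * (K - b) * Real.exp (b / β) + β^2 * Real.exp (b / β))
        - (β * (K - a) * Real.exp (a / β) + β^2 * Real.exp (a / β)) := by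
  have key : ∀ u : ℝ, HasDerivAt
      (fun u => β * (K - u) * Real.exp (u / β) + β^2 * Real.exp (u / β))
      ((K - u) * Real.exp (u / β)) u := by
    intro u
    have h1 : HasDerivAt (fun u : ℝ => u / β) (1 / β) u := (hasDerivAt_id u).div_const β
    have hexp : HasDerivAt (fun u : ℝ => Real.exp (u / β)) (Real.exp (u / β) * (1 / β)) u :=
      h1.exp
    have hA : HasDerivAt (fun u : ℝ => β * (K - u)) (-β) u := by
      have : HasDerivAt (fun u : ℝ => K - u) (-1) u := by simpa using (hasDerivAt_id' u).const_sub K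
      simpa using this.const_mul β
    have := (hA.mul hexp).add (hexp.const_mul (β^2))
    refine this.congr_deriv ?_
    field_simp
    ring
  rw [intervalIntegral.integral_eq_sub_of_hasDerivAt (fun u _ => key u)]
  exact (Continuous.mul (by continuity) (by continuity)).intervalIntegrable a b

lemma Wtop_eq (c β : ℝ) (hβ : 0 < β) :
    Wtop c β = ((1 - c + β) - (c + 2*β) * Real.exp (-c / β) + β * Real.exp (-(1/β)))
      / (1 - Real.exp (-(1/β))) := by
  have hβ' : β ≠ 0 := ne_of_gt hβ
  have hE : Real.exp (1/β) ≠ 0 := Real.exp_ne_zero _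
  have e1 : Real.exp ((1-c) / β) = Real.exp (1/β) * Real.exp (-c/β) := by
    rw [← Real.exp_add]; congr 1; field_simp; ring
  have e2 : Real.exp (-(1/β)) = (Real.exp (1/β))⁻¹ := by
    rw [← Real.exp_neg]
  have e3 : Real.exp (0 / β) = 1 := by norm_num
  have hden : β * (Real.exp (1/β) - 1) ≠ 0 := by
    have h1 : (1:ℝ) < Real.exp (1/β) := by
      rw [show (1:ℝ) = Real.exp 0 by simp]
      exact Real.exp_lt_exp.mpr (by positivity)
    exact mul_ne_zero hβ' (by linarith)
  have hden2 : 1 - Real.exp (-(1/β)) ≠ 0 := by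
    have : Real.exp (-(1/β)) < 1 := by
      rw [Real.exp_lt_one_iff]
      simp only [neg_neg, Left.neg_neg_iff]
      positivity
    linarith
  unfold Wtop
  rw [integral_mul_exp β 0 (1-c) hβ', integral_sub_mul_exp β (2-c) (1-c) 1 hβ', e1, e3]
  rw [div_eq_div_iff hden hden2]
  rw [e2]
  field_simp
  ring

lemma exp_neg_div_tendsto (k : ℝ) (hk : 0 < k) :
    Tendsto (fun β : ℝ => Real.exp (-k / β)) (nhdsWithin 0 (Set.Ioi 0)) (nhds 0) := by
  have h1 : Tendsto (fun β : ℝ => k / β) (nhdsWithin 0 (Set.Ioi 0)) atTop := by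
    simpa [div_eq_mul_inv] using tendsto_inv_nhdsGT_zero.const_mul_atTop hk
  have h2 : Tendsto (fun β : ℝ => -k / β) (nhdsWithin 0 (Set.Ioi 0)) atBot := by
    have := tendsto_neg_atTop_atBot.comp h1
    convert this using 1
    ext β
    simp [neg_div, Function.comp]
  exact Real.tendsto_exp_atBot.comp h2

/-- Misspecification in the high-reward region caps attainable performance:
the 'top c% wrong' win rate tends to `1 − c < 1` as `β → 0⁺`. -/
theorem top_wrong_win_rate_limit (c : ℝ) (hc : 0 < c) (hc1 : c < 1) :
    Tendsto (fun β => Wtop c β) (nhdsWithin 0 (Set.Ioi 0)) (nhds (1 - c)) := by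
  have hid : Tendsto (fun β : ℝ => β) (nhdsWithin 0 (Set.Ioi 0)) (nhds 0) :=
    tendsto_id.mono_left nhdsWithin_le_nhds
  have hec : Tendsto (fun β : ℝ => Real.exp (-c / β)) (nhdsWithin 0 (Set.Ioi 0)) (nhds 0) :=
    exp_neg_div_tendsto c hc
  have he1 : Tendsto (fun β : ℝ => Real.exp (-(1/β))) (nhdsWithin 0 (Set.Ioi 0)) (nhds 0) := by
    have := exp_neg_div_tendsto 1 one_pos
    simpa [neg_div] using this
  have hnum : Tendsto (fun β : ℝ => (1 - c + β) - (c + 2*β) * Real.exp (-c / β)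
      + β * Real.exp (-(1/β))) (nhdsWithin 0 (Set.Ioi 0)) (nhds (1 - c)) := by
    have : Tendsto (fun β : ℝ => (1 - c + β) - (c + 2*β) * Real.exp (-c / β)
        + β * Real.exp (-(1/β))) (nhdsWithin 0 (Set.Ioi 0))
        (nhds ((1 - c + 0) - (c + 2*0) * 0 + 0 * 0)) := by
      exact (((tendsto_const_nhds.add hid).sub
        (((tendsto_const_nhds.add (hid.const_mul 2)).mul hec))).add (hid.mul he1))
    simpa using this
  have hden : Tendsto (fun β : ℝ => 1 - Real.exp (-(1/β))) (nhdsWithin 0 (Set.Ioi 0))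
      (nhds 1) := by
    simpa using tendsto_const_nhds.sub he1
  have h := hnum.div hden (by norm_num)
  rw [div_one] at h
  refine Tendsto.congr' ?_ h
  filter_upwards [self_mem_nhdsWithin] with β hβ
  exact (Wtop_eq c β hβ).symm
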